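/- When σ = μ, the left-sided Riemann–Liouville derivative of order μ of the Jacobi poly-fractonomial of first kind gives a Legendre polynomial: D_{-1,ξ}^μ [(1+ξ)^μ P_{n-1}^{-μ,μ}(ξ)] = (Γ(n+μ)/Γ(n)) P_{n-1}(ξ), where P_{n-1} is the Legendre polynomial of degree n-1. -/

import Mathlib

open MeasureTheory Real Set Filter

/-- Generalized binomial coefficient `C(x, m)` for real `x`. -/
noncomputable def gbinom (x : ℝ) (m : ℕ) : ℝ :=
  (∏ i ∈ Finset.range m, (x - i)) / (Nat.factorial m)

/-- Jacobi polynomial `P_n^{a,b}(x)` (explicit hypergeometric-type sum). -/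
noncomputable def jacobiP (a b : ℝ) (n : ℕ) (x : ℝ) : ℝ :=
  ∑ s ∈ Finset.range (n + 1),
    gbinom ((n : ℝ) + a) (n - s) * gbinom ((n : ℝ) + b) s *
      ((x - 1) / 2) ^ s * ((x + 1) / 2) ^ (n - s)

/-- Left-sided Riemann–Liouville fractional integral of order `ν` with lower terminal `a`. -/
noncomputable def RLintL (a ν : ℝ) (u : ℝ → ℝ) (x : ℝ) : ℝ :=
  (1 / Real.Gamma ν) * ∫ s in a..x, u s * (x - s) ^ (ν - 1)

/-- Right-sided Riemann–Liouville fractional integral of order `ν` with upper terminal `b`. -/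
noncomputable def RLintR (b ν : ℝ) (u : ℝ → ℝ) (x : ℝ) : ℝ :=
  (1 / Real.Gamma ν) * ∫ s in x..b, u s * (s - x) ^ (ν - 1)

/-- Left-sided Riemann–Liouville fractional derivative of order `σ`. -/
noncomputable def RLderivL (a σ : ℝ) (u : ℝ → ℝ) (x : ℝ) : ℝ :=
  iteratedDeriv ⌈σ⌉₊ (RLintL a ((⌈σ⌉₊ : ℝ) - σ) u) x

/-- Right-sided Riemann–Liouville fractional derivative of order `σ`. -/
noncomputable def RLderivR (b σ : ℝ) (u : ℝ → ℝ) (x : ℝ) : ℝ :=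
  (-1 : ℝ) ^ ⌈σ⌉₊ * iteratedDeriv ⌈σ⌉₊ (RLintR b ((⌈σ⌉₊ : ℝ) - σ) u) x

/-- Left-sided Caputo fractional derivative of order `σ`. -/
noncomputable def CaputoL (a σ : ℝ) (u : ℝ → ℝ) (x : ℝ) : ℝ :=
  RLintL a ((⌈σ⌉₊ : ℝ) - σ) (iteratedDeriv ⌈σ⌉₊ u) x

lemma gbinom_zero (x : ℝ) : gbinom x 0 = 1 := by simp [gbinom]

lemma gbinom_absorb (x : ℝ) (k : ℕ) :
    ((k : ℝ) + 1) * gbinom x (k + 1) = x * gbinom (x - 1) k := by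
  unfold gbinom
  rw [Finset.prod_range_succ']
  have hf : (Nat.factorial (k+1) : ℝ) = (k+1) * Nat.factorial k := by
    push_cast [Nat.factorial_succ]; ring
  have h1 : (∏ i ∈ Finset.range k, (x - (↑(i+1) : ℝ))) = ∏ i ∈ Finset.range k, (x - 1 - i) := by
    apply Finset.prod_congr rfl; intro i _; push_cast; ring
  rw [h1, hf]
  have hk : ((k:ℝ)+1) ≠ 0 := by positivity
  have hfk : (Nat.factorial k : ℝ) ≠ 0 := by positivity
  field_simp
  ring

lemma gbinom_vandermonde (k : ℕ) : ∀ x y : ℝ,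
    (∑ r ∈ Finset.range (k + 1), gbinom x r * gbinom y (k - r)) = gbinom (x + y) k := by
  induction k with
  | zero => intro x y; simp [gbinom_zero]
  | succ k ih =>
    intro x y
    have hk : ((k:ℝ) + 1) ≠ 0 := by positivity
    have key : ((k:ℝ)+1) * (∑ r ∈ Finset.range (k + 2), gbinom x r * gbinom y (k + 1 - r))
        = ((k:ℝ)+1) * gbinom (x + y) (k+1) := by
      rw [gbinom_absorb (x+y) k, Finset.mul_sum]
      have split : ∀ r ∈ Finset.range (k + 2),
          ((k:ℝ)+1) * (gbinom x r * gbinom y (k + 1 - r))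
          = (r : ℝ) * gbinom x r * gbinom y (k+1-r)
            + gbinom x r * (((k+1-r : ℕ) : ℝ) * gbinom y (k+1-r)) := by
        intro r hr
        have hr' : r ≤ k + 1 := by simpa [Nat.lt_succ_iff] using hr
        have : ((k+1-r : ℕ) : ℝ) = (k:ℝ) + 1 - r := by
          push_cast [Nat.cast_sub hr']; ring
        rw [this]; ring
      rw [Finset.sum_congr rfl split, Finset.sum_add_distrib]
      -- first sum
      have h1 : (∑ r ∈ Finset.range (k + 2), (r:ℝ) * gbinom x r * gbinom y (k+1-r))
          = x * gbinom (x - 1 + y) k := by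
        rw [Finset.sum_range_succ']
        simp only [Nat.cast_zero, zero_mul, add_zero, mul_zero]
        have : ∀ r ∈ Finset.range (k+1),
            ((r+1 : ℕ):ℝ) * gbinom x (r+1) * gbinom y (k+1-(r+1))
            = x * (gbinom (x-1) r * gbinom y (k - r)) := by
          intro r _
          have := gbinom_absorb x r
          push_cast
          rw [this]; ring
        rw [Finset.sum_congr rfl this, ← Finset.mul_sum, ih (x-1) y]
      -- second sum
      have h2 : (∑ r ∈ Finset.range (k + 2), gbinom x r * (((k+1-r : ℕ) : ℝ) * gbinom y (k+1-r)))
          = y * gbinom (x + (y-1)) k := by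
        rw [Finset.sum_range_succ]
        simp only [Nat.sub_self, Nat.cast_zero, zero_mul, mul_zero, add_zero]
        have : ∀ r ∈ Finset.range (k+1),
            gbinom x r * (((k+1-r : ℕ) : ℝ) * gbinom y (k+1-r))
            = y * (gbinom x r * gbinom (y-1) (k-r)) := by
          intro r hr
          have hr' : r ≤ k := by simpa [Nat.lt_succ_iff] using hr
          have e1 : k + 1 - r = (k - r) + 1 := by omega
          rw [e1]
          have e2 : ((k - r + 1 : ℕ) : ℝ) = ((k-r : ℕ):ℝ) + 1 := by push_cast; ring
          rw [e2, gbinom_absorb y (k-r)]; ring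
        rw [Finset.sum_congr rfl this, ← Finset.mul_sum, ih x (y-1)]
      rw [h1, h2]
      have : x - 1 + y = x + y - 1 := by ring
      rw [this]
      have : x + (y - 1) = x + y - 1 := by ring
      rw [this]; ring
    exact mul_left_cancel₀ hk key


lemma gbinom_trinomial (x : ℝ) {j M : ℕ} (h : j ≤ M) :
    gbinom x M * (Nat.choose M j : ℝ) = gbinom x j * gbinom (x - j) (M - j) := by
  unfold gbinom
  have hM : M = j + (M - j) := by omega
  have hp : (∏ i ∈ Finset.range M, (x - i)) =
      (∏ i ∈ Finset.range j, (x - i)) * ∏ i ∈ Finset.range (M - j), (x - (j:ℝ) - i) := by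
    rw [hM, Finset.prod_range_add]
    have e : j + (M - j) - j = M - j := by omega
    rw [e]
    congr 1
    apply Finset.prod_congr rfl; intro i _; push_cast; ring
  rw [hp]
  have hc : (Nat.choose M j : ℝ) * (Nat.factorial j) * (Nat.factorial (M - j)) = Nat.factorial M := by
    exact_mod_cast congrArg (Nat.cast : ℕ → ℝ) (Nat.choose_mul_factorial_mul_factorial h)
  have h1 : (Nat.factorial j : ℝ) ≠ 0 := by positivity
  have h2 : (Nat.factorial (M-j) : ℝ) ≠ 0 := by positivity
  have h3 : (Nat.factorial M : ℝ) ≠ 0 := by positivity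
  field_simp
  rw [← hc]; ring


lemma jacobi_expand (a b : ℝ) (m : ℕ) (x : ℝ) :
    jacobiP a b m x = ∑ k ∈ Finset.range (m+1),
      (-1)^(m-k) * gbinom ((m:ℝ)+b) (m-k) * gbinom ((m:ℝ)+(k:ℝ)+a+b) k * ((x+1)/2)^k := by
  set y : ℝ := (x+1)/2 with hy
  -- LHS: reflect and expand (y-1)^(m-r)
  have lhs_eq : jacobiP a b m x
      = ∑ r ∈ Finset.range (m+1), ∑ t ∈ Finset.range (m - r + 1),
          gbinom ((m:ℝ)+a) r * gbinom ((m:ℝ)+b) (m-r) *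
            (Nat.choose (m-r) t : ℝ) * (-1)^(m-r-t) * y^(r+t) := by
    unfold jacobiP
    rw [← Finset.sum_range_reflect]
    apply Finset.sum_congr rfl
    intro r hr
    have hr' : r ≤ m := by simpa [Nat.lt_succ_iff] using hr
    simp only [Nat.add_sub_cancel]
    have e1 : m - (m - r) = r := by omega
    rw [e1]
    have e2 : (x - 1)/2 = y + (-1) := by rw [hy]; ring
    rw [e2, add_pow, Finset.mul_sum, Finset.sum_mul]
    apply Finset.sum_congr rfl
    intro t ht
    rw [hy]
    ring
  rw [lhs_eq]
  -- RHS: expand via vandermonde and trinomial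
  have rhs_eq : (∑ k ∈ Finset.range (m+1),
      (-1)^(m-k) * gbinom ((m:ℝ)+b) (m-k) * gbinom ((m:ℝ)+(k:ℝ)+a+b) k * y^k)
      = ∑ k ∈ Finset.range (m+1), ∑ r ∈ Finset.range (k+1),
          gbinom ((m:ℝ)+a) r * gbinom ((m:ℝ)+b) (m-r) *
            (Nat.choose (m-r) (m-k) : ℝ) * (-1)^(m-k) * y^k := by
    apply Finset.sum_congr rfl
    intro k hk
    have hk' : k ≤ m := by simpa [Nat.lt_succ_iff] using hk
    have hv : gbinom ((m:ℝ)+(k:ℝ)+a+b) k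
        = ∑ r ∈ Finset.range (k+1), gbinom ((m:ℝ)+a) r * gbinom ((k:ℝ)+b) (k-r) := by
      rw [gbinom_vandermonde k ((m:ℝ)+a) ((k:ℝ)+b)]
      ring_nf
    rw [hv, Finset.mul_sum, Finset.sum_mul]
    apply Finset.sum_congr rfl
    intro r hrk
    have hrk' : r ≤ k := by simpa [Nat.lt_succ_iff] using hrk
    have htri := gbinom_trinomial ((m:ℝ)+b) (j := m-k) (M := m-r) (by omega)
    have e3 : ((m:ℝ)+b) - ((m-k : ℕ) : ℝ) = (k:ℝ) + b := by
      rw [Nat.cast_sub hk']; ring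
    have e4 : (m-r) - (m-k) = k - r := by omega
    rw [e3, e4] at htri
    rw [show gbinom ((m:ℝ)+a) r * gbinom ((m:ℝ)+b) (m-r) * (Nat.choose (m-r) (m-k):ℝ)
        = gbinom ((m:ℝ)+a) r * (gbinom ((m:ℝ)+b) (m-r) * (Nat.choose (m-r) (m-k):ℝ)) from by ring,
      htri]
    ring
  rw [rhs_eq]
  -- reindex via sigma bijection (r,t) ↦ (r+t, r)
  rw [Finset.sum_sigma', Finset.sum_sigma']
  apply Finset.sum_nbij' (i := fun p => (⟨p.1 + p.2, p.1⟩ : Σ _ : ℕ, ℕ))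
    (j := fun p => (⟨p.2, p.1 - p.2⟩ : Σ _ : ℕ, ℕ))
  · rintro ⟨r, t⟩ hp
    simp only [Finset.mem_sigma, Finset.mem_range] at hp ⊢
    omega
  · rintro ⟨k, r⟩ hp
    simp only [Finset.mem_sigma, Finset.mem_range] at hp ⊢
    omega
  · rintro ⟨r, t⟩ hp
    simp only [Finset.mem_sigma, Finset.mem_range] at hp
    dsimp only
    simp only [Sigma.mk.inj_iff, heq_eq_eq, true_and]
    omega
  · rintro ⟨k, r⟩ hp
    simp only [Finset.mem_sigma, Finset.mem_range] at hp
    have e : r + (k - r) = k := by omega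
    simp [e]
  · rintro ⟨r, t⟩ hp
    simp only [Finset.mem_sigma, Finset.mem_range] at hp
    simp only
    have e5 : m - (r + t) = m - r - t := by omega
    have e6 : (m - r).choose (m - (r+t)) = (m - r).choose t := by
      have e7 : m - (r+t) = (m - r) - t := by omega
      rw [e7, Nat.choose_symm (by omega)]
    rw [e6, e5]


lemma Gamma_add_nat (c : ℝ) (hc : 0 < c) (j : ℕ) :
    Real.Gamma (c + j) = Real.Gamma c * ∏ i ∈ Finset.range j, (c + i) := by
  induction j with
  | zero => simp
  | succ j ih =>
    have h1 : c + (j+1 : ℕ) = (c + (j:ℕ)) + 1 := by push_cast; ring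
    rw [h1, Real.Gamma_add_one (by positivity), ih, Finset.prod_range_succ]
    ring

lemma prod_gamma (μ : ℝ) (hμ : 0 ≤ μ) {k m : ℕ} (hk : k ≤ m) :
    Real.Gamma (μ + (k:ℝ) + 1) * ∏ i ∈ Finset.range (m-k), ((m:ℝ) + μ - (i:ℝ))
      = Real.Gamma ((m:ℝ) + μ + 1) := by
  have hrefl : (∏ i ∈ Finset.range (m-k), ((m:ℝ) + μ - (i:ℝ)))
      = ∏ i ∈ Finset.range (m-k), ((μ + (k:ℝ) + 1) + (i:ℝ)) := by
    rw [← Finset.prod_range_reflect (fun i => (μ + (k:ℝ) + 1) + (i:ℝ)) (m-k)]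
    apply Finset.prod_congr rfl
    intro i hi
    have hi' : i < m - k := Finset.mem_range.mp hi
    have e1 : m - k - 1 - i = m - (k+1+i) := by omega
    have e2 : ((m - (k+1+i) : ℕ) : ℝ) = (m:ℝ) - (k+1+i) := by
      rw [Nat.cast_sub (by omega)]; push_cast; ring
    simp only [e1, e2]
    ring
  rw [hrefl]
  have h := Gamma_add_nat (μ + (k:ℝ) + 1) (by positivity) (m-k)
  rw [← h]
  congr 1
  rw [Nat.cast_sub hk]
  ring

lemma key_coeff (μ : ℝ) (hμ0 : 0 < μ) {k m : ℕ} (hk : k ≤ m) :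
    gbinom ((m:ℝ)+μ) (m-k) * Real.Gamma (μ+(k:ℝ)+1) * Real.Gamma ((m:ℝ)+1)
      = Real.Gamma ((m:ℝ)+μ+1) * gbinom ((m:ℝ)) (m-k) * Real.Gamma ((k:ℝ)+1) := by
  have h1 := prod_gamma μ hμ0.le hk
  have h2 := prod_gamma 0 le_rfl hk
  simp only [add_zero, zero_add] at h2
  unfold gbinom
  linear_combination (((Nat.factorial (m-k)):ℝ))⁻¹ *
    (Real.Gamma ((m:ℝ)+1) * h1 - Real.Gamma ((m:ℝ)+μ+1) * h2)


lemma real_beta {p q : ℝ} (hp : 0 < p) (hq : 0 < q) :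
    (∫ t in (0:ℝ)..1, t^(p-1) * (1-t)^(q-1))
      = Real.Gamma p * Real.Gamma q / Real.Gamma (p+q) := by
  have h := Complex.Gamma_mul_Gamma_eq_betaIntegral (s := (p:ℂ)) (t := (q:ℂ))
    (by simpa using hp) (by simpa using hq)
  have hbeta : Complex.betaIntegral (p:ℂ) (q:ℂ)
      = ((∫ t in (0:ℝ)..1, t^(p-1) * (1-t)^(q-1) : ℝ) : ℂ) := by
    rw [Complex.betaIntegral, ← intervalIntegral.integral_ofReal]
    apply intervalIntegral.integral_congr
    intro t ht
    rw [Set.uIcc_of_le (by norm_num : (0:ℝ) ≤ 1)] at ht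
    have ht0 : 0 ≤ t := ht.1
    have ht1 : 0 ≤ 1 - t := by linarith [ht.2]
    simp only [Complex.ofReal_mul]
    rw [Complex.ofReal_cpow ht0, Complex.ofReal_cpow ht1]
    push_cast
    ring
  rw [hbeta, ← Complex.ofReal_add, Complex.Gamma_ofReal, Complex.Gamma_ofReal,
    Complex.Gamma_ofReal, ← Complex.ofReal_mul, ← Complex.ofReal_mul] at h
  have h' : Real.Gamma p * Real.Gamma q
      = Real.Gamma (p+q) * ∫ t in (0:ℝ)..1, t^(p-1) * (1-t)^(q-1) := by
    exact_mod_cast h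
  have hne : Real.Gamma (p+q) ≠ 0 := (Real.Gamma_pos_of_pos (by linarith)).ne'
  field_simp
  linarith [h']

lemma frac_int_monomial {p q x : ℝ} (hp : -1 < p) (hq : -1 < q) (hx : (-1:ℝ) < x) :
    (∫ s in (-1:ℝ)..x, (1+s)^p * (x-s)^q)
      = Real.Gamma (p+1) * Real.Gamma (q+1) / Real.Gamma (p+q+2) * (1+x)^(p+q+1) := by
  set c : ℝ := 1 + x with hc
  have hc0 : 0 < c := by simp [hc]; linarith
  have hsub := intervalIntegral.integral_comp_mul_add
    (a := (0:ℝ)) (b := 1) (f := fun y => (1+y)^p * (x-y)^q) (c := c) hc0.ne' (-1)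
  -- hsub : ∫ t in 0..1, f (c*t + -1) = c⁻¹ • ∫ y in c*0 + -1..c*1 + -1, f y
  have e1 : c * 0 + -1 = -1 := by ring
  have e2 : c * 1 + -1 = x := by rw [hc]; ring
  rw [e1, e2] at hsub
  have key : (∫ s in (-1:ℝ)..x, (1+s)^p * (x-s)^q)
      = c * ∫ t in (0:ℝ)..1, (fun y => (1+y)^p * (x-y)^q) (c*t + -1) := by
    rw [hsub, smul_eq_mul, ← mul_assoc, mul_inv_cancel₀ hc0.ne', one_mul]
  rw [key]
  have congr2 : (∫ t in (0:ℝ)..1, (fun y => (1+y)^p * (x-y)^q) (c*t + -1))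
      = ∫ t in (0:ℝ)..1, c^(p+q) * (t^p * (1-t)^q) := by
    apply intervalIntegral.integral_congr
    intro t ht
    rw [Set.uIcc_of_le (by norm_num : (0:ℝ) ≤ 1)] at ht
    have ht0 : 0 ≤ t := ht.1
    have ht1 : 0 ≤ 1 - t := by linarith [ht.2]
    simp only
    have a1 : 1 + (c*t + -1) = c * t := by ring
    have a2 : x - (c*t + -1) = c * (1-t) := by rw [hc]; ring
    rw [a1, a2, Real.mul_rpow hc0.le ht0, Real.mul_rpow hc0.le ht1,
      Real.rpow_add hc0 p q]
    ring
  rw [congr2, intervalIntegral.integral_const_mul]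
  have hbeta := real_beta (p := p+1) (q := q+1) (by linarith) (by linarith)
  simp only [add_sub_cancel_right] at hbeta
  rw [hbeta]
  have e3 : p + 1 + (q + 1) = p + q + 2 := by ring
  rw [e3]
  rw [show c * (c^(p+q) * (Real.Gamma (p+1) * Real.Gamma (q+1) / Real.Gamma (p+q+2)))
      = (c^(p+q) * c^(1:ℝ)) * (Real.Gamma (p+1) * Real.Gamma (q+1) / Real.Gamma (p+q+2)) from by
    rw [Real.rpow_one]; ring]
  rw [← Real.rpow_add hc0]
  rw [hc]
  ring_nf

lemma intInt_monomial {x : ℝ} (_hx : (-1:ℝ) < x) {p μ : ℝ} (hp : 0 < p) (hμ1 : μ < 1) :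
    IntervalIntegrable (fun s => (1+s)^p * (x-s)^(-μ)) volume (-1) x := by
  have h1 : IntervalIntegrable (fun s => (x-s)^(-μ)) volume (-1) x := by
    have h0 := intervalIntegral.intervalIntegrable_rpow' (a := 0) (b := x+1)
      (r := -μ) (by linarith)
    have h2 := h0.comp_sub_left x
    have e1 : x - 0 = x := by ring
    have e2 : x - (x+1) = -1 := by ring
    rw [e1, e2] at h2
    exact h2.symm
  apply h1.continuousOn_mul
  apply ContinuousOn.rpow_const
  · exact (continuous_const.add continuous_id).continuousOn
  · intro s _
    right; exact hp.le


/-- When `σ = μ`, the left RL derivative of the Jacobi poly-fractonomial of first kind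
is `(Γ(n+μ)/Γ(n))` times the Legendre polynomial `P_{n-1} = P_{n-1}^{0,0}`. -/
theorem fracDeriv_polyfractonomial_legendre (μ : ℝ) (hμ0 : 0 < μ) (hμ1 : μ < 1)
    (n : ℕ) (hn : 1 ≤ n) (ξ : ℝ) (hξ : ξ ∈ Set.Ioc (-1 : ℝ) 1) :
    RLderivL (-1) μ (fun s => (1 + s) ^ μ * jacobiP (-μ) μ (n - 1) s) ξ =
      Real.Gamma ((n : ℝ) + μ) / Real.Gamma (n : ℝ) * jacobiP 0 0 (n - 1) ξ := by
  obtain ⟨hξ1, hξ2⟩ := hξ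
  set m : ℕ := n - 1 with hm
  have hnm : (n:ℝ) = (m:ℝ) + 1 := by
    have h : n = m + 1 := by omega
    rw [h]; push_cast; ring
  have hceil : ⌈μ⌉₊ = 1 := by
    rw [Nat.ceil_eq_iff one_ne_zero]
    constructor
    · simpa using hμ0
    · simpa using hμ1.le
  set u : ℝ → ℝ := fun s => (1 + s) ^ μ * jacobiP (-μ) μ m s with hu
  set D : ℕ → ℝ := fun k =>
    (-1:ℝ)^(m-k) * gbinom ((m:ℝ)+μ) (m-k) * gbinom ((m:ℝ)+(k:ℝ)) k * (1/2:ℝ)^k *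
      (Real.Gamma (μ+(k:ℝ)+1) / Real.Gamma ((k:ℝ)+2)) with hD
  set H : ℝ → ℝ := fun x => ∑ k ∈ Finset.range (m+1), D k * (1+x)^(k+1) with hH
  have h1μ : (0:ℝ) < 1 - μ := by linarith
  have hΓ1μ : Real.Gamma (1-μ) ≠ 0 := (Real.Gamma_pos_of_pos h1μ).ne'
  -- Step A : explicit formula for the fractional integral on `Ioi (-1)`
  have hA : ∀ x ∈ Ioi (-1:ℝ), RLintL (-1) (1-μ) u x = H x := by
    intro x hx
    rw [mem_Ioi] at hx
    rw [RLintL]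
    simp only [show (1:ℝ) - μ - 1 = -μ from by ring]
    have hcong : (∫ s in (-1:ℝ)..x, u s * (x-s)^(-μ))
        = ∫ s in (-1:ℝ)..x, ∑ k ∈ Finset.range (m+1),
            ((-1:ℝ)^(m-k) * gbinom ((m:ℝ)+μ) (m-k) * gbinom ((m:ℝ)+(k:ℝ)) k * (1/2:ℝ)^k) *
              ((1+s)^(μ+(k:ℝ)) * (x-s)^(-μ)) := by
      apply intervalIntegral.integral_congr
      intro s hs
      rw [Set.uIcc_of_le (by linarith : (-1:ℝ) ≤ x)] at hs
      have hs1 : -1 ≤ s := hs.1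
      rw [hu]
      simp only
      rw [jacobi_expand (-μ) μ m s, Finset.mul_sum, Finset.sum_mul]
      apply Finset.sum_congr rfl
      intro k _
      have hg : gbinom ((m:ℝ)+(k:ℝ)+(-μ)+μ) k = gbinom ((m:ℝ)+(k:ℝ)) k := by
        norm_num
      rw [hg]
      have hpow : (1+s)^μ * (1+s)^k = (1+s)^(μ+(k:ℝ)) := by
        rcases eq_or_lt_of_le hs1 with h | h
        · rw [show (1:ℝ)+s = 0 from by linarith]
          rw [Real.zero_rpow hμ0.ne',
            Real.zero_rpow (show μ+(k:ℝ) ≠ 0 from by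
              have : (0:ℝ) ≤ (k:ℝ) := Nat.cast_nonneg k
              linarith)]
          ring
        · rw [← Real.rpow_natCast (1+s) k, ← Real.rpow_add (by linarith)]
      have hhalf : ((s+1)/2:ℝ)^k = (1+s)^k * (1/2:ℝ)^k := by
        rw [show ((s+1)/2:ℝ) = (1+s)*(1/2) from by ring, mul_pow]
      rw [hhalf, ← hpow]
      ring
    rw [hcong, intervalIntegral.integral_finset_sum]
    swap
    · intro k _
      exact (intInt_monomial hx
        (add_pos_of_pos_of_nonneg hμ0 (Nat.cast_nonneg k)) hμ1).const_mul _
    simp only [intervalIntegral.integral_const_mul]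
    rw [hH]
    simp only
    rw [Finset.mul_sum]
    apply Finset.sum_congr rfl
    intro k _
    have heval : (∫ s in (-1:ℝ)..x, (1+s)^(μ+(k:ℝ)) * (x-s)^(-μ))
        = Real.Gamma (μ+(k:ℝ)+1) * Real.Gamma (1-μ) / Real.Gamma ((k:ℝ)+2)
            * (1+x)^(k+1) := by
      have h := frac_int_monomial (p := μ+(k:ℝ)) (q := -μ)
        (by have : (0:ℝ) ≤ (k:ℝ) := Nat.cast_nonneg k; linarith)
        (by linarith) hx
      rw [show μ+(k:ℝ)+(-μ)+2 = (k:ℝ)+2 from by ring,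
          show -μ+1 = 1-μ from by ring,
          show μ+(k:ℝ)+(-μ)+1 = (k:ℝ)+1 from by ring] at h
      rw [h]
      congr 1
      rw [← Real.rpow_natCast (1+x) (k+1)]
      congr 1
      push_cast; ring
    rw [heval, hD]
    simp only
    field_simp
  -- Step B : differentiate
  have hder : HasDerivAt H (∑ k ∈ Finset.range (m+1), D k * ((k:ℝ)+1) * (1+ξ)^k) ξ := by
    rw [hH]
    apply HasDerivAt.fun_sum
    intro k _
    have h1 : HasDerivAt (fun x : ℝ => 1 + x) 1 ξ := (hasDerivAt_id ξ).const_add 1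
    have h2 := (h1.fun_pow (k+1)).const_mul (D k)
    refine h2.congr_deriv ?_
    simp only [Nat.add_sub_cancel]
    push_cast; ring
  have hF : RLderivL (-1) μ u ξ
      = deriv (RLintL (-1) (1-μ) u) ξ := by
    rw [RLderivL, hceil, iteratedDeriv_one, Nat.cast_one]
  rw [hF]
  have hev : RLintL (-1) (1-μ) u =ᶠ[nhds ξ] H :=
    eventuallyEq_of_mem (Ioi_mem_nhds hξ1) hA
  rw [hev.deriv_eq, hder.deriv]
  -- Step C : identify with the Legendre polynomial
  rw [jacobi_expand 0 0 m ξ, Finset.mul_sum]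
  apply Finset.sum_congr rfl
  intro k hk
  have hk' : k ≤ m := by
    have := Finset.mem_range.mp hk; omega
  rw [hD]
  simp only [add_zero]
  rw [hnm]
  have hkm : (0:ℝ) < (m:ℝ)+1 := by positivity
  have hΓk : Real.Gamma ((k:ℝ)+1) ≠ 0 :=
    (Real.Gamma_pos_of_pos (by positivity)).ne'
  have hΓm : Real.Gamma ((m:ℝ)+1) ≠ 0 := (Real.Gamma_pos_of_pos hkm).ne'
  have hΓ2 : Real.Gamma ((k:ℝ)+2) = ((k:ℝ)+1) * Real.Gamma ((k:ℝ)+1) := by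
    rw [show (k:ℝ)+2 = ((k:ℝ)+1)+1 from by ring,
      Real.Gamma_add_one (by positivity)]
  have hkey := key_coeff μ hμ0 hk'
  rw [hΓ2, show (m:ℝ)+1+μ = (m:ℝ)+μ+1 from by ring]
  have hhalf : ((ξ+1)/2:ℝ)^k = (1+ξ)^k * (1/2:ℝ)^k := by
    rw [show ((ξ+1)/2:ℝ) = (1+ξ)*(1/2) from by ring, mul_pow]
  rw [hhalf]
  have hk1 : ((k:ℝ)+1) ≠ 0 := by positivity
  field_simp
  linear_combination (gbinom ((m:ℝ)+(k:ℝ)) k * (1+ξ)^k) * hkey
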